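/- Let X be a regular topological space. If the tightness of Q_P(X) is countable, i.e. t(Q_P(X)) = ℵ₀, then X is a Lindelöf space (every open cover of X has a countable subcover). -/
import Mathlib


open Cardinal
open scoped Classical

universe u v w

/-- A function between topological spaces is quasi-continuous if for every point `x` and
all open sets `U ∋ x` and `V ∋ f x` there is a nonempty open `G ⊆ U` with `f '' G ⊆ V`. -/
def QuasiContinuous {X Y : Type*} [TopologicalSpace X] [TopologicalSpace Y] (f : X → Y) : Prop :=
  ∀ x : X, ∀ U : Set X, IsOpen U → x ∈ U → ∀ V : Set Y, IsOpen V → f x ∈ V →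
    ∃ G : Set X, IsOpen G ∧ G.Nonempty ∧ G ⊆ U ∧ f '' G ⊆ V

/-- `QP X Y` : the quasi-continuous functions from `X` to `Y`, topologized as a subspace of
the product topology on `X → Y` (topology of pointwise convergence). -/
abbrev QP (X Y : Type*) [TopologicalSpace X] [TopologicalSpace Y] :=
  {f : X → Y // QuasiContinuous f}

/-- `CP X Y` : the continuous functions from `X` to `Y` with the topology of
pointwise convergence. -/
abbrev CP (X Y : Type*) [TopologicalSpace X] [TopologicalSpace Y] :=
  {f : X → Y // Continuous f}

/-- The weight of a topological space: `ℵ₀ +` the least cardinality of a basis. -/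
noncomputable def weight (Z : Type u) [TopologicalSpace Z] : Cardinal.{u} :=
  ℵ₀ + sInf {c | ∃ B : Set (Set Z), TopologicalSpace.IsTopologicalBasis B ∧ #B = c}

/-- A network of a space: a family of (arbitrary) subsets such that every open `U ∋ z`
contains some member of the family containing `z`. -/
def IsNetwork {Z : Type u} [TopologicalSpace Z] (N : Set (Set Z)) : Prop :=
  ∀ z : Z, ∀ U : Set Z, IsOpen U → z ∈ U → ∃ A ∈ N, z ∈ A ∧ A ⊆ U

/-- Network weight: `ℵ₀ +` the least cardinality of a network. -/
noncomputable def netWeight (Z : Type u) [TopologicalSpace Z] : Cardinal.{u} :=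
  ℵ₀ + sInf {c | ∃ N : Set (Set Z), IsNetwork N ∧ #N = c}

/-- Density: `ℵ₀ +` the least cardinality of a dense subset. -/
noncomputable def density (Z : Type u) [TopologicalSpace Z] : Cardinal.{u} :=
  ℵ₀ + sInf {c | ∃ D : Set Z, Dense D ∧ #D = c}

/-- Lindelöf degree: `ℵ₀ +` the least cardinal `η` such that every open cover has a
subcover of cardinality at most `η`. -/
noncomputable def lindelofDegree (X : Type u) [TopologicalSpace X] : Cardinal.{u} :=
  ℵ₀ + sInf {η | ∀ V : Set (Set X), (∀ U ∈ V, IsOpen U) → ⋃₀ V = Set.univ →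
      ∃ W ⊆ V, #W ≤ η ∧ ⋃₀ W = Set.univ}

/-- Tightness: `ℵ₀ +` the least cardinal `η` such that whenever `z ∈ closure A` there is
`B ⊆ A` with `#B ≤ η` and `z ∈ closure B`. -/
noncomputable def tightness (Z : Type u) [TopologicalSpace Z] : Cardinal.{u} :=
  ℵ₀ + sInf {η | ∀ z : Z, ∀ A : Set Z, z ∈ closure A →
      ∃ B ⊆ A, #B ≤ η ∧ z ∈ closure B}

/-- Pseudocharacter of a space: the sup over points `z` of `ℵ₀ +` the least cardinality of a
family of open sets whose intersection is `{z}`. -/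
noncomputable def pseudoChar (Z : Type u) [TopologicalSpace Z] : Cardinal.{u} :=
  ⨆ z : Z, (ℵ₀ + sInf {c | ∃ γ : Set (Set Z), (∀ U ∈ γ, IsOpen U) ∧ ⋂₀ γ = {z} ∧ #γ = c})

/-- Weak covering number: `ℵ₀ +` the least cardinality of a family of open sets whose union
is dense. -/
noncomputable def weakCov (X : Type u) [TopologicalSpace X] : Cardinal.{u} :=
  ℵ₀ + sInf {c | ∃ J : Set (Set X), (∀ U ∈ J, IsOpen U) ∧ closure (⋃₀ J) = Set.univ ∧ #J = c}

/-- Cardinal logarithm: the least `μ` with `κ ≤ 2 ^ μ`. -/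
noncomputable def cardLog (κ : Cardinal.{u}) : Cardinal.{u} :=
  sInf {μ | κ ≤ 2 ^ μ}

/-- i-weight: `ℵ₀ +` the least weight of a space onto which `Z` admits a continuous
bijection. -/
noncomputable def iWeight (Z : Type u) [TopologicalSpace Z] : Cardinal.{u} :=
  ℵ₀ + sInf {c | ∃ (W : Type u) (_ : TopologicalSpace W) (f : Z → W),
      Continuous f ∧ Function.Bijective f ∧ weight W = c}

/-- The characteristic function of the complement of the closure of an open set is
quasi-continuous. -/
lemma qc_indicator {X : Type u} [TopologicalSpace X] (W : Set X) (hW : IsOpen W) :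
    QuasiContinuous (fun x => if x ∈ closure W then (0 : ℝ) else 1) := by
  intro x U hU hxU V hV hfxV
  by_cases hx : x ∈ closure W
  · refine ⟨U ∩ W, hU.inter hW, mem_closure_iff.mp hx U hU hxU, Set.inter_subset_left, ?_⟩
    rintro y ⟨w, ⟨hwU, hwW⟩, rfl⟩
    simp only [if_pos (subset_closure hwW)]
    simpa [if_pos hx] using hfxV
  · refine ⟨U ∩ (closure W)ᶜ, hU.inter isClosed_closure.isOpen_compl, ⟨x, hxU, hx⟩,
      Set.inter_subset_left, ?_⟩
    rintro y ⟨w, ⟨hwU, hw⟩, rfl⟩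
    simp only [if_neg hw]
    simpa [if_neg hx] using hfxV

/-- Constant functions are quasi-continuous. -/
lemma qc_const {X Y : Type*} [TopologicalSpace X] [TopologicalSpace Y] (c : Y) :
    QuasiContinuous (fun _ : X => c) := by
  intro x U hU hxU V hV hcV
  exact ⟨U, hU, ⟨x, hxU⟩, subset_rfl, by rintro y ⟨w, _, rfl⟩; exact hcV⟩

/-- For a regular space `X`, if `t(Q_P(X)) = ℵ₀` then `X` is Lindelöf:
every open cover has a countable subcover. -/
theorem stmt2 (X : Type u) [TopologicalSpace X] [RegularSpace X]
    (h : tightness (QP X ℝ) = ℵ₀) :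
    ∀ V : Set (Set X), (∀ U ∈ V, IsOpen U) → ⋃₀ V = Set.univ →
      ∃ W ⊆ V, W.Countable ∧ ⋃₀ W = Set.univ := by
  classical
  intro 𝒱 hopen hcov
  -- for each point choose an element of the cover and a smaller open set whose closure
  -- is inside it (regularity)
  have hpt : ∀ i : X, ∃ V W : Set X, V ∈ 𝒱 ∧ i ∈ W ∧ IsOpen W ∧ closure W ⊆ V := by
    intro i
    have hi : i ∈ ⋃₀ 𝒱 := hcov ▸ Set.mem_univ i
    obtain ⟨V, hV, hiV⟩ := hi
    obtain ⟨t, ht, htc, hts⟩ := exists_mem_nhds_isClosed_subset ((hopen V hV).mem_nhds hiV)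
    exact ⟨V, interior t, hV, mem_interior_iff_mem_nhds.mpr ht, isOpen_interior,
      (closure_minimal interior_subset htc).trans hts⟩
  choose Vf Wf hVf hWfmem hWfopen hWfcl using hpt
  -- the constant zero function
  set z : QP X ℝ := ⟨fun _ => 0, qc_const 0⟩ with hz
  -- the approximating set A
  set A : Set (QP X ℝ) :=
    {f | ∃ I : Finset (Set X), ↑I ⊆ 𝒱 ∧ ∀ x, x ∉ ⋃₀ (I : Set (Set X)) → f.1 x = 1} with hA
  -- z is in the closure of A
  have hzA : z ∈ closure A := by
    rw [mem_closure_iff]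
    intro O hO hzO
    obtain ⟨O', hO', rfl⟩ := isOpen_induced_iff.mp hO
    obtain ⟨I, u, hu, hsub⟩ := isOpen_pi_iff.mp hO' z.1 hzO
    set Wb : Set X := ⋃ i ∈ I, Wf i with hWb
    have hWbo : IsOpen Wb := isOpen_biUnion fun i _ => hWfopen i
    have hclWb : closure Wb ⊆ ⋃ i ∈ I, closure (Wf i) := by
      apply closure_minimal
      · exact Set.iUnion₂_mono fun i _ => subset_closure
      · exact Set.Finite.isClosed_biUnion I.finite_toSet fun i _ => isClosed_closure
    refine ⟨⟨fun x => if x ∈ closure Wb then 0 else 1, qc_indicator Wb hWbo⟩, ?_, ?_⟩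
    · apply hsub
      intro i hi
      have hicl : i ∈ closure Wb := subset_closure (Set.mem_biUnion hi (hWfmem i))
      simpa [hicl] using (hu i hi).2
    · refine ⟨I.image Vf, ?_, ?_⟩
      · intro s hs
        simp only [Finset.coe_image, Set.mem_image, Finset.mem_coe] at hs
        obtain ⟨i, _, rfl⟩ := hs
        exact hVf i
      · intro x hx
        simp only
        rw [if_neg]
        intro hxcl
        obtain ⟨i, hiI, hxi⟩ := Set.mem_iUnion₂.mp (hclWb hxcl)
        exact hx ⟨Vf i, by simp only [Finset.coe_image]; exact ⟨i, hiI, rfl⟩, hWfcl i hxi⟩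
  -- extract a countable subset using the tightness hypothesis
  set S : Set Cardinal.{u} := {η | ∀ z : QP X ℝ, ∀ A : Set (QP X ℝ), z ∈ closure A →
      ∃ B ⊆ A, #B ≤ η ∧ z ∈ closure B} with hS
  have hSne : S.Nonempty :=
    ⟨#(QP X ℝ), fun z A hzA => ⟨A, subset_rfl, Cardinal.mk_set_le A, hzA⟩⟩
  have hmem : sInf S ∈ S := csInf_mem hSne
  have hle : sInf S ≤ ℵ₀ := by
    have h2 : ℵ₀ + sInf S = ℵ₀ := h
    calc sInf S ≤ ℵ₀ + sInf S := self_le_add_left _ _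
      _ = ℵ₀ := h2
  obtain ⟨B, hBA, hBcard, hzB⟩ := hmem z A hzA
  have hBc : B.Countable :=
    Set.countable_coe_iff.mp (Cardinal.mk_le_aleph0_iff.mp (hBcard.trans hle))
  -- pick a finite subfamily for each element of B
  set F : QP X ℝ → Finset (Set X) := fun g =>
    if hg : g ∈ A then hg.choose else ∅ with hF
  have hFsub : ∀ g ∈ A, ↑(F g) ⊆ 𝒱 := by
    intro g hg
    simp only [hF, dif_pos hg]
    exact hg.choose_spec.1
  have hFone : ∀ g (hg : g ∈ A), ∀ x, x ∉ ⋃₀ ((F g : Set (Set X))) → g.1 x = 1 := by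
    intro g hg x hx
    refine hg.choose_spec.2 x ?_
    simpa only [hF, dif_pos hg] using hx
  refine ⟨⋃ g ∈ B, ((F g : Set (Set X))), ?_, ?_, ?_⟩
  · intro s hs
    obtain ⟨g, hgB, hsg⟩ := Set.mem_iUnion₂.mp hs
    exact hFsub g (hBA hgB) hsg
  · exact Set.Countable.biUnion hBc fun g _ => (F g).countable_toSet
  · rw [Set.eq_univ_iff_forall]
    intro x
    -- the evaluation-at-x neighborhood of z
    have hOopen : IsOpen {f : QP X ℝ | f.1 x < 1} := by
      have : Continuous fun f : QP X ℝ => f.1 x :=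
        (continuous_apply x).comp continuous_subtype_val
      exact (isOpen_Iio (a := (1 : ℝ))).preimage this
    have hzO : z ∈ {f : QP X ℝ | f.1 x < 1} := by
      simp [hz]
    obtain ⟨g, hgO, hgB⟩ := mem_closure_iff.mp hzB _ hOopen hzO
    have hgx : g.1 x < 1 := hgO
    have hxin : x ∈ ⋃₀ ((F g : Set (Set X))) := by
      by_contra hx
      exact absurd (hFone g (hBA hgB) x hx) (by linarith)
    obtain ⟨s, hs, hxs⟩ := hxin
    exact ⟨s, Set.mem_iUnion₂.mpr ⟨g, hgB, hs⟩, hxs⟩
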